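/- arXiv:1304.1191 — 2 statements merged into one kernel-verified Lean document; each statement's English description precedes it below -/
import Mathlib

section
/- Let 0 < α < 1, let l ≥ 2 be an integer, and let v ∈ (0,1). Then ∫₀^v (l − 1)² u^{1−l} (1 − u)^{α−1} ( ∫₀^u s^{2l−3} (1 − s)^{1−α} ds ) du ≤ (2/α) v^l. -/
set_option maxHeartbeats 1000000

open MeasureTheory Real Set

lemma lint_ioo_eq (a b : ℝ) (hab : a ≤ b) (f : ℝ → ℝ)
    (hf : IntervalIntegrable f volume a b) (h0 : ∀ x ∈ Ioc a b, 0 ≤ f x) :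
    ∫⁻ x in Ioo a b, ENNReal.ofReal (f x) = ENNReal.ofReal (∫ x in a..b, f x) := by
  rw [setLIntegral_congr Ioo_ae_eq_Ioc, intervalIntegral.integral_of_le hab,
    ← ofReal_integral_eq_lintegral_ofReal hf.1
      ((ae_restrict_iff' measurableSet_Ioc).2 (ae_of_all _ h0))]

lemma int_rpow_eval (c : ℝ) (p : ℝ) (hp : -1 < p) :
    ∫ x in (0:ℝ)..c, x ^ p = c ^ (p + 1) / (p + 1) := by
  rw [integral_rpow (Or.inl hp), Real.zero_rpow (by linarith), sub_zero]

lemma lint_one_sub_rpow (α s v : ℝ) (hα0 : 0 < α) (hα1 : α < 1) (hs : 0 ≤ s) (hsv : s ≤ v)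
    (hv : v < 1) :
    ∫⁻ u in Ioo s v, ENNReal.ofReal ((1 - u) ^ (α - 1))
      ≤ ENNReal.ofReal ((1 - s) ^ α / α) := by
  have hcont : ContinuousOn (fun u : ℝ => (1 - u) ^ (α - 1)) (uIcc s v) := by
    apply ContinuousOn.rpow_const (by fun_prop)
    intro x hx
    rw [uIcc_of_le hsv] at hx
    exact Or.inl (ne_of_gt (by linarith [hx.2]))
  have hint : IntervalIntegrable (fun u : ℝ => (1 - u) ^ (α - 1)) volume s v :=
    hcont.intervalIntegrable
  rw [lint_ioo_eq s v hsv _ hint (fun x hx => Real.rpow_nonneg (by linarith [hx.2]) _)]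
  have heval : ∫ u in s..v, (1 - u) ^ (α - 1)
      = ((1 - s) ^ α - (1 - v) ^ α) / α := by
    have := intervalIntegral.integral_comp_sub_left (a := s) (b := v)
      (fun x : ℝ => x ^ (α - 1)) 1
    rw [this, integral_rpow (Or.inl (by linarith))]
    ring_nf
  rw [heval]
  apply ENNReal.ofReal_le_ofReal
  have h1 : (0:ℝ) ≤ (1 - v) ^ α := Real.rpow_nonneg (by linarith) _
  gcongr
  linarith

lemma young_pt (α x y w : ℝ) (hα0 : 0 < α) (hα1 : α < 1) (hx : 0 < x) (hxy : x ≤ y)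
    (hw : 0 < w) (hwx : w ≤ x) :
    x ^ (α - 1) * y ^ (1 - α) ≤ (1 - α) * (y / w) + α := by
  have hy0 : (0:ℝ) ≤ y := by linarith
  have key : (y / x) ^ (1 - α) * 1 ^ α ≤ (1 - α) * (y / x) + α * 1 :=
    Real.geom_mean_le_arith_mean2_weighted (by linarith) hα0.le (by positivity) zero_le_one
      (by ring)
  have heq : x ^ (α - 1) * y ^ (1 - α) = (y / x) ^ (1 - α) := by
    rw [Real.div_rpow hy0 hx.le]
    rw [show α - 1 = -(1 - α) by ring, Real.rpow_neg hx.le]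
    ring
  have h2 : y / x ≤ y / w := div_le_div_of_nonneg_left hy0 hw hwx
  calc x ^ (α - 1) * y ^ (1 - α) = (y / x) ^ (1 - α) := heq
    _ ≤ (1 - α) * (y / x) + α := by simpa using key
    _ ≤ (1 - α) * (y / w) + α := by nlinarith

lemma case2_real (α L v : ℝ) (hα0 : 0 < α) (hα1 : α < 1) (hL : 2 ≤ L) (hv0 : 0 < v)
    (hc : v * (L^2 + 1) ≤ L * (L - 1)) :
    (L-1)^2 * ( ((1-α)/(1-v) + α) / ((2*L-2)*L) - ((1-α)/(1-v)) * v / ((2*L-1)*(L+1)) )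
      ≤ 2 / α := by
  have hv1 : v < 1 := by nlinarith
  have h1v : 0 < 1 - v := by linarith
  have hL0 : 0 < L := by linarith
  have h2L2 : 0 < 2*L - 2 := by linarith
  have h2L1 : 0 < 2*L - 1 := by linarith
  have hL1 : 0 < L + 1 := by linarith
  have ht : 1/(1-v) ≤ (L^2+1)/(L+1) := by
    rw [div_le_div_iff₀ h1v hL1]; nlinarith
  set s : ℝ := (1-α)/(1-v) with hs
  have hs0 : 0 ≤ s := div_nonneg (by linarith) (by linarith)
  have hsv : s * (1-v) = 1 - α := by rw [hs]; field_simp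
  have hsb : s ≤ (1-α) * ((L^2+1)/(L+1)) := by
    rw [hs, div_eq_mul_one_div]
    exact mul_le_mul_of_nonneg_left ht (by linarith)
  have hkey : ((1-α)/(1-v) + α) / ((2*L-2)*L) - s * v / ((2*L-1)*(L+1))
      = s * ((1-v)/((2*L-1)*(L+1)) + (3*L-1)/((2*L-2)*L*(2*L-1)*(L+1)))
        + α / ((2*L-2)*L) := by
    have n0 : 1 - v ≠ 0 := by linarith
    have n1 : 2*L-2 ≠ 0 := by linarith
    have n2 : 2*L-1 ≠ 0 := by linarith
    have n3 : L ≠ 0 := by linarith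
    have n4 : L+1 ≠ 0 := by linarith
    have n5 : L-1 ≠ 0 := by linarith
    rw [hs]; field_simp; ring
  rw [hkey]
  have e1 : (L-1)^2 * (s * ((1-v)/((2*L-1)*(L+1)))) ≤ (1-α)/2 := by
    rw [show (L-1)^2 * (s * ((1-v) / ((2*L-1)*(L+1))))
        = ((L-1)^2 * (s*(1-v))) / ((2*L-1)*(L+1)) by ring, hsv,
      div_le_div_iff₀ (by positivity) (by norm_num : (0:ℝ) < 2)]
    nlinarith
  have e2 : (L-1)^2 * (s * ((3*L-1)/((2*L-2)*L*(2*L-1)*(L+1)))) ≤ (1-α) * (3/4) := by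
    have hb : (L-1)^2 * (s * ((3*L-1)/((2*L-2)*L*(2*L-1)*(L+1))))
        ≤ (L-1)^2 * (((1-α)*((L^2+1)/(L+1))) * ((3*L-1)/((2*L-2)*L*(2*L-1)*(L+1)))) := by
      apply mul_le_mul_of_nonneg_left _ (by positivity)
      exact mul_le_mul_of_nonneg_right hsb (div_nonneg (by linarith) (by positivity))
    refine hb.trans ?_
    have expand : (L-1)^2 * ((1-α)*((L^2+1)/(L+1)) * ((3*L-1)/((2*L-2)*L*(2*L-1)*(L+1))))
        = (1-α) * (((L-1)^2 * (L^2+1) * (3*L-1)) / ((L+1) * ((2*L-2)*L*(2*L-1)*(L+1)))) := by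
      field_simp
    rw [expand]
    apply mul_le_mul_of_nonneg_left _ (by linarith)
    rw [div_le_iff₀ (by positivity)]
    nlinarith [sq_nonneg (L-2), sq_nonneg L, sq_nonneg (L-1)]
  have e3 : (L-1)^2 * (α / ((2*L-2)*L)) ≤ 1/2 := by
    rw [show (L-1)^2 * (α / ((2*L-2)*L)) = ((L-1)^2 * α) / ((2*L-2)*L) by ring,
      div_le_div_iff₀ (by positivity) (by norm_num : (0:ℝ) < 2)]
    nlinarith
  have h2 : (2:ℝ) ≤ 2/α := by
    rw [le_div_iff₀ hα0]; nlinarith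
  calc (L-1)^2 * (s * ((1-v)/((2*L-1)*(L+1)) + (3*L-1)/((2*L-2)*L*(2*L-1)*(L+1))) + α / ((2*L-2)*L))
      = (L-1)^2 * (s * ((1-v)/((2*L-1)*(L+1)))) + (L-1)^2 * (s * ((3*L-1)/((2*L-2)*L*(2*L-1)*(L+1)))) + (L-1)^2 * (α / ((2*L-2)*L)) := by ring
    _ ≤ (1-α)/2 + (1-α)*(3/4) + 1/2 := by linarith
    _ ≤ 2 := by nlinarith
    _ ≤ 2/α := h2

theorem stmt15 (α : ℝ) (hα0 : 0 < α) (hα1 : α < 1) (l : ℕ) (hl : 2 ≤ l)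
    (v : ℝ) (hv : v ∈ Ioo (0:ℝ) 1) :
    ∫⁻ u in Ioo (0:ℝ) v,
        ENNReal.ofReal (((l : ℝ) - 1)^2 * u ^ ((1:ℝ) - l) * (1 - u) ^ (α - 1)) *
          ∫⁻ s in Ioo (0:ℝ) u, ENNReal.ofReal (s ^ (2 * (l:ℝ) - 3) * (1 - s) ^ (1 - α))
      ≤ ENNReal.ofReal ((2 / α) * v ^ l) := by
  obtain ⟨hv0, hv1⟩ := hv
  set L : ℝ := (l : ℝ) with hLdef
  have hL : (2:ℝ) ≤ L := by rw [hLdef]; exact_mod_cast hl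
  have h2L3 : (0:ℝ) ≤ 2*L - 3 := by linarith
  have h2L2 : (0:ℝ) < 2*L - 2 := by linarith
  have h2L1 : (0:ℝ) < 2*L - 1 := by linarith
  have hL0 : (0:ℝ) < L := by linarith
  have hvl : v ^ l = v ^ L := (Real.rpow_natCast v l).symm
  rcases le_or_gt (v * (L^2+1)) (L*(L-1)) with hcase | hcase
  · -- Case 2 : v small
    set B : ℝ := (1-α)/(1-v) with hB
    have hB0 : 0 ≤ B := div_nonneg (by linarith) (by linarith)
    set Fb : ℝ → ℝ := fun u =>
      (L-1)^2 * ((B + α) * u ^ (L-1) / (2*L-2) - B * u ^ L / (2*L-1)) with hFb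
    have key : ∀ u ∈ Ioo (0:ℝ) v,
        ENNReal.ofReal ((L - 1)^2 * u ^ ((1:ℝ) - L) * (1 - u) ^ (α - 1)) *
          ∫⁻ s in Ioo (0:ℝ) u, ENNReal.ofReal (s ^ (2 * L - 3) * (1 - s) ^ (1 - α))
        ≤ ENNReal.ofReal (Fb u) := by
      intro u hu
      obtain ⟨hu0, huv⟩ := hu
      have hu1 : u < 1 := by linarith
      have hfu0 : (0:ℝ) ≤ (L - 1)^2 * u ^ ((1:ℝ) - L) * (1 - u) ^ (α - 1) :=
        mul_nonneg (mul_nonneg (sq_nonneg _) (Real.rpow_nonneg hu0.le _))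
          (Real.rpow_nonneg (by linarith) _)
      rw [← lintegral_const_mul' _ _ ENNReal.ofReal_ne_top]
      have step1 : ∫⁻ s in Ioo (0:ℝ) u,
          ENNReal.ofReal ((L - 1)^2 * u ^ ((1:ℝ) - L) * (1 - u) ^ (α - 1)) *
            ENNReal.ofReal (s ^ (2 * L - 3) * (1 - s) ^ (1 - α))
          ≤ ∫⁻ s in Ioo (0:ℝ) u,
            ENNReal.ofReal ((L-1)^2 * u ^ ((1:ℝ)-L) * (s ^ (2*L-3) * (B * (1-s) + α))) := by
        apply setLIntegral_mono' measurableSet_Ioo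
        intro s hs
        obtain ⟨hs0, hsu⟩ := hs
        rw [← ENNReal.ofReal_mul hfu0]
        apply ENNReal.ofReal_le_ofReal
        have hy := young_pt α (1-u) (1-s) (1-v) hα0 hα1 (by linarith) (by linarith)
          (by linarith) (by linarith)
        have hC : (0:ℝ) ≤ (L-1)^2 * u ^ ((1:ℝ)-L) * s ^ (2*L-3) := by positivity
        calc (L - 1)^2 * u ^ ((1:ℝ) - L) * (1 - u) ^ (α - 1) * (s ^ (2*L-3) * (1-s) ^ (1-α))
            = ((L-1)^2 * u ^ ((1:ℝ)-L) * s ^ (2*L-3)) * ((1-u) ^ (α-1) * (1-s) ^ (1-α)) := by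
              ring
          _ ≤ ((L-1)^2 * u ^ ((1:ℝ)-L) * s ^ (2*L-3)) * ((1-α) * ((1-s)/(1-v)) + α) :=
              mul_le_mul_of_nonneg_left hy hC
          _ = (L-1)^2 * u ^ ((1:ℝ)-L) * (s ^ (2*L-3) * (B * (1-s) + α)) := by
              rw [hB]; ring
      refine step1.trans ?_
      -- evaluate inner integral
      have hrw : ∀ s : ℝ, 0 ≤ s →
          (L-1)^2 * u ^ ((1:ℝ)-L) * (s ^ (2*L-3) * (B * (1-s) + α))
          = ((L-1)^2 * u ^ ((1:ℝ)-L)) * ((B + α) * s ^ (2*L-3) - B * s ^ (2*L-2)) := by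
        intro s hs
        rcases eq_or_lt_of_le hs with h | h
        · rw [← h, Real.zero_rpow (by linarith : 2*L-3 ≠ 0),
            Real.zero_rpow (by linarith : 2*L-2 ≠ 0)]
          ring
        · rw [show 2*L-2 = (2*L-3) + 1 by ring, Real.rpow_add_one h.ne']
          ring
      have hint3 : IntervalIntegrable (fun s : ℝ => s ^ (2*L-3)) volume 0 u :=
        intervalIntegral.intervalIntegrable_rpow' (by linarith)
      have hint4 : IntervalIntegrable (fun s : ℝ => s ^ (2*L-2)) volume 0 u :=
        intervalIntegral.intervalIntegrable_rpow' (by linarith)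
      have hintc : IntervalIntegrable
          (fun s : ℝ => (L-1)^2 * u ^ ((1:ℝ)-L) * (s ^ (2*L-3) * (B * (1-s) + α)))
          volume 0 u := by
        apply IntervalIntegrable.congr_ae (f := fun s : ℝ =>
          ((L-1)^2 * u ^ ((1:ℝ)-L)) * ((B + α) * s ^ (2*L-3) - B * s ^ (2*L-2)))
        · exact (((hint3.const_mul _).sub (hint4.const_mul _)).const_mul _)
        · apply (ae_restrict_iff' measurableSet_uIoc).2
          apply ae_of_all
          intro s hs
          rw [Set.uIoc_of_le (by linarith : (0:ℝ) ≤ u)] at hs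
          exact (hrw s hs.1.le).symm
      rw [lint_ioo_eq 0 u (by linarith) _ hintc ?nn]
      case nn =>
        intro s hs
        have hs0 : (0:ℝ) < s := hs.1
        have hsu : s ≤ u := hs.2
        have : 0 ≤ B * (1-s) + α := by
          have : 0 ≤ B * (1-s) := mul_nonneg hB0 (by linarith)
          linarith
        positivity
      apply ENNReal.ofReal_le_ofReal
      have heval : ∫ s in (0:ℝ)..u, (L-1)^2 * u ^ ((1:ℝ)-L) * (s ^ (2*L-3) * (B * (1-s) + α))
          = ((L-1)^2 * u ^ ((1:ℝ)-L)) * ((B+α) * (u ^ (2*L-2)/(2*L-2)) - B * (u ^ (2*L-1)/(2*L-1))) := by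
        rw [intervalIntegral.integral_congr (g := fun s : ℝ =>
          ((L-1)^2 * u ^ ((1:ℝ)-L)) * ((B + α) * s ^ (2*L-3) - B * s ^ (2*L-2)))]
        · rw [intervalIntegral.integral_const_mul, intervalIntegral.integral_sub
            (hint3.const_mul _) (hint4.const_mul _),
            intervalIntegral.integral_const_mul, intervalIntegral.integral_const_mul,
            int_rpow_eval u _ (by linarith), int_rpow_eval u _ (by linarith),
            show 2*L-3+1 = 2*L-2 by ring, show 2*L-2+1 = 2*L-1 by ring]
        · intro s hs
          rw [Set.uIcc_of_le (by linarith : (0:ℝ) ≤ u)] at hs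
          exact hrw s hs.1
      rw [heval]
      have e1 : u ^ ((1:ℝ)-L) * u ^ (2*L-2) = u ^ (L-1) := by
        rw [← Real.rpow_add hu0]; congr 1; ring
      have e2 : u ^ ((1:ℝ)-L) * u ^ (2*L-1) = u ^ L := by
        rw [← Real.rpow_add hu0]; congr 1; ring
      apply le_of_eq
      simp only [hFb]
      rw [← e1, ← e2]
      ring
    calc ∫⁻ u in Ioo (0:ℝ) v,
        ENNReal.ofReal ((L - 1)^2 * u ^ ((1:ℝ) - L) * (1 - u) ^ (α - 1)) *
          ∫⁻ s in Ioo (0:ℝ) u, ENNReal.ofReal (s ^ (2 * L - 3) * (1 - s) ^ (1 - α))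
        ≤ ∫⁻ u in Ioo (0:ℝ) v, ENNReal.ofReal (Fb u) :=
          setLIntegral_mono' measurableSet_Ioo key
      _ ≤ ENNReal.ofReal ((2 / α) * v ^ l) := by
        have hpowc : ∀ p : ℝ, 0 ≤ p → ContinuousOn (fun u : ℝ => u ^ p) (uIcc 0 v) :=
          fun p hp => continuousOn_id.rpow_const (fun x _ => Or.inr hp)
        have hFbint : IntervalIntegrable Fb volume 0 v := by
          apply ContinuousOn.intervalIntegrable
          simp only [hFb]
          exact continuousOn_const.mul
            (((continuousOn_const.mul (hpowc _ (by linarith))).div_const _).sub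
              ((continuousOn_const.mul (hpowc _ (by linarith))).div_const _))
        have hFbnn : ∀ u ∈ Ioc (0:ℝ) v, 0 ≤ Fb u := by
          intro u hu
          obtain ⟨hu0, huv⟩ := hu
          have hupow : u ^ L ≤ u ^ (L-1) :=
            Real.rpow_le_rpow_of_exponent_ge hu0 (by linarith) (by linarith)
          have hup0 : (0:ℝ) ≤ u ^ (L-1) := Real.rpow_nonneg hu0.le _
          simp only [hFb]
          apply mul_nonneg (sq_nonneg _)
          rw [sub_nonneg]
          have hnum : B * u ^ L ≤ (B + α) * u ^ (L-1) := by
            apply mul_le_mul (by linarith) hupow (Real.rpow_nonneg hu0.le _) (by linarith)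
          calc B * u ^ L / (2*L-1) ≤ (B + α) * u ^ (L-1) / (2*L-1) := by gcongr
            _ ≤ (B + α) * u ^ (L-1) / (2*L-2) := by
                apply div_le_div_of_nonneg_left (by positivity) h2L2 (by linarith)
        rw [lint_ioo_eq 0 v hv0.le Fb hFbint hFbnn]
        apply ENNReal.ofReal_le_ofReal
        have hrwFb : Fb = fun u : ℝ =>
            ((L-1)^2 * (B+α)/(2*L-2)) * u ^ (L-1) - ((L-1)^2 * B/(2*L-1)) * u ^ L := by
          funext u; simp only [hFb]; ring
        have hintL1 : IntervalIntegrable (fun u : ℝ => u ^ (L-1)) volume 0 v :=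
          intervalIntegral.intervalIntegrable_rpow' (by linarith)
        have hintL : IntervalIntegrable (fun u : ℝ => u ^ L) volume 0 v :=
          intervalIntegral.intervalIntegrable_rpow' (by linarith)
        have heval2 : ∫ u in (0:ℝ)..v, Fb u
            = ((L-1)^2 * (B+α)/(2*L-2)) * (v ^ L / L)
              - ((L-1)^2 * B/(2*L-1)) * (v ^ (L+1) / (L+1)) := by
          rw [hrwFb, intervalIntegral.integral_sub (hintL1.const_mul _) (hintL.const_mul _),
            intervalIntegral.integral_const_mul, intervalIntegral.integral_const_mul,
            int_rpow_eval v _ (by linarith), int_rpow_eval v _ (by linarith),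
            show L-1+1 = L by ring]
        rw [heval2, hvl, Real.rpow_add_one hv0.ne' L]
        have hX0 : (0:ℝ) ≤ v ^ L := Real.rpow_nonneg hv0.le _
        have main := case2_real α L v hα0 hα1 hL hv0 hcase
        rw [← hB] at main
        calc ((L-1)^2 * (B+α)/(2*L-2)) * (v ^ L / L)
              - ((L-1)^2 * B/(2*L-1)) * (v ^ L * v / (L+1))
            = v ^ L * ((L-1)^2 * ((B + α) / ((2*L-2)*L) - B * v / ((2*L-1)*(L+1)))) := by
              have n1 : (2*L-2) ≠ 0 := h2L2.ne'
              have n5 : L - 1 ≠ 0 := by linarith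
              have n2 : (2*L-1) ≠ 0 := h2L1.ne'
              have n3 : L ≠ 0 := hL0.ne'
              have n4 : (L+1) ≠ 0 := by intro h; rw [hLdef] at *; push_cast at h ⊢; linarith
              field_simp
          _ ≤ v ^ L * (2/α) := mul_le_mul_of_nonneg_left main hX0
          _ = 2/α * v ^ L := by ring
  · -- Case 1 : v large
    have hcase' : L * (L-1) ≤ v * (L^2+1) := hcase.le
    set fe : ℝ → ℝ := fun u => (L - 1)^2 * u ^ ((1:ℝ) - L) * (1 - u) ^ (α - 1) with hfe
    set ge : ℝ → ℝ := fun s => s ^ (2 * L - 3) * (1 - s) ^ (1 - α) with hge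
    set Gb : ℝ → ℝ := fun s => (L-1)^2 / α * (s ^ (L - 2) * (1 - s)) with hGb
    have mfe : Measurable fe := by
      simp only [hfe]
      exact (measurable_const.mul (measurable_id.pow measurable_const)).mul
        ((measurable_const.sub measurable_id).pow measurable_const)
    have mge : Measurable ge := by
      simp only [hge]
      exact (measurable_id.pow measurable_const).mul
        ((measurable_const.sub measurable_id).pow measurable_const)
    set H : ℝ × ℝ → ENNReal := fun p => Set.indicator {q : ℝ × ℝ | q.2 < q.1}
      (fun q => ENNReal.ofReal (fe q.1) * ENNReal.ofReal (ge q.2)) p with hH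
    have mH : Measurable H := by
      simp only [hH]
      exact Measurable.indicator
        ((ENNReal.measurable_ofReal.comp (mfe.comp measurable_fst)).mul
          (ENNReal.measurable_ofReal.comp (mge.comp measurable_snd)))
        (measurableSet_lt measurable_snd measurable_fst)
    have stepA : ∀ u ∈ Ioo (0:ℝ) v,
        ENNReal.ofReal (fe u) * ∫⁻ s in Ioo (0:ℝ) u, ENNReal.ofReal (ge s)
          = ∫⁻ s in Ioo (0:ℝ) v, H (u, s) := by
      intro u hu
      obtain ⟨hu0, huv⟩ := hu
      have hfun : (fun s => H (u, s))
          = (Iio u).indicator (fun s => ENNReal.ofReal (fe u) * ENNReal.ofReal (ge s)) := by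
        funext s
        by_cases h : s < u <;>
          simp [hH, Set.indicator, h]
      rw [show (∫⁻ s in Ioo (0:ℝ) v, H (u, s)) = ∫⁻ s in Ioo (0:ℝ) v,
          (Iio u).indicator (fun s => ENNReal.ofReal (fe u) * ENNReal.ofReal (ge s)) s by
        rw [hfun],
        lintegral_indicator measurableSet_Iio, Measure.restrict_restrict measurableSet_Iio,
        show Iio u ∩ Ioo (0:ℝ) v = Ioo (0:ℝ) u by
          ext x
          simp only [mem_inter_iff, mem_Iio, mem_Ioo]
          constructor
          · rintro ⟨h1, h2, h3⟩; exact ⟨h2, h1⟩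
          · rintro ⟨h1, h2⟩; exact ⟨h2, h1, by linarith⟩,
        lintegral_const_mul' _ _ ENNReal.ofReal_ne_top]
    have stepB : ∀ s ∈ Ioo (0:ℝ) v,
        (∫⁻ u in Ioo (0:ℝ) v, H (u, s))
          = ENNReal.ofReal (ge s) * ∫⁻ u in Ioo s v, ENNReal.ofReal (fe u) := by
      intro s hs
      obtain ⟨hs0, hsv⟩ := hs
      have hfun : (fun u => H (u, s))
          = (Ioi s).indicator (fun u => ENNReal.ofReal (fe u) * ENNReal.ofReal (ge s)) := by
        funext u
        by_cases h : s < u <;>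
          simp [hH, Set.indicator, h, mem_Ioi]
      rw [show (∫⁻ u in Ioo (0:ℝ) v, H (u, s)) = ∫⁻ u in Ioo (0:ℝ) v,
          (Ioi s).indicator (fun u => ENNReal.ofReal (fe u) * ENNReal.ofReal (ge s)) u by
        rw [hfun],
        lintegral_indicator measurableSet_Ioi, Measure.restrict_restrict measurableSet_Ioi,
        show Ioi s ∩ Ioo (0:ℝ) v = Ioo s v by
          ext x
          simp only [mem_inter_iff, mem_Ioi, mem_Ioo]
          constructor
          · rintro ⟨h1, h2, h3⟩; exact ⟨h1, h3⟩
          · rintro ⟨h1, h2⟩; exact ⟨h1, by linarith, h2⟩,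
        lintegral_mul_const' _ _ ENNReal.ofReal_ne_top, mul_comm]
    have stepC : ∀ s ∈ Ioo (0:ℝ) v,
        ENNReal.ofReal (ge s) * (∫⁻ u in Ioo s v, ENNReal.ofReal (fe u))
          ≤ ENNReal.ofReal (Gb s) := by
      intro s hs
      obtain ⟨hs0, hsv⟩ := hs
      have hs1 : s < 1 := by linarith
      have hc0 : (0:ℝ) ≤ (L-1)^2 * s ^ ((1:ℝ) - L) :=
        mul_nonneg (sq_nonneg _) (Real.rpow_nonneg hs0.le _)
      have inner : (∫⁻ u in Ioo s v, ENNReal.ofReal (fe u))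
          ≤ ENNReal.ofReal ((L-1)^2 * s ^ ((1:ℝ) - L)) * ENNReal.ofReal ((1-s)^α / α) := by
        have ib : (∫⁻ u in Ioo s v, ENNReal.ofReal (fe u))
            ≤ ∫⁻ u in Ioo s v, ENNReal.ofReal ((L-1)^2 * s ^ ((1:ℝ) - L))
                * ENNReal.ofReal ((1-u) ^ (α-1)) := by
          apply setLIntegral_mono' measurableSet_Ioo
          intro u hu
          rw [← ENNReal.ofReal_mul hc0]
          apply ENNReal.ofReal_le_ofReal
          simp only [hfe]
          apply mul_le_mul_of_nonneg_right _ (Real.rpow_nonneg (by linarith [hu.2]) _)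
          apply mul_le_mul_of_nonneg_left _ (sq_nonneg _)
          exact Real.rpow_le_rpow_of_nonpos hs0 hu.1.le (by linarith)
        refine ib.trans ?_
        rw [lintegral_const_mul' _ _ ENNReal.ofReal_ne_top]
        exact mul_le_mul_right (lint_one_sub_rpow α s v hα0 hα1 hs0.le (by linarith) hv1) _
      calc ENNReal.ofReal (ge s) * (∫⁻ u in Ioo s v, ENNReal.ofReal (fe u))
          ≤ ENNReal.ofReal (ge s) * (ENNReal.ofReal ((L-1)^2 * s ^ ((1:ℝ) - L))
              * ENNReal.ofReal ((1-s)^α / α)) := mul_le_mul_right inner _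
        _ = ENNReal.ofReal (Gb s) := by
            rw [← ENNReal.ofReal_mul hc0, ← ENNReal.ofReal_mul
              (by simp only [hge]; exact mul_nonneg (Real.rpow_nonneg hs0.le _) (Real.rpow_nonneg (by linarith) _))]
            congr 1
            have e3 : s ^ (2*L-3) * s ^ ((1:ℝ)-L) = s ^ (L-2) := by
              rw [← Real.rpow_add hs0]; congr 1; ring
            have e4 : (1-s) ^ (1-α) * (1-s) ^ α = 1-s := by
              rw [← Real.rpow_add (by linarith : (0:ℝ) < 1 - s)]
              norm_num
            simp only [hge, hGb]
            calc s ^ (2*L-3) * (1-s) ^ (1-α) * ((L-1)^2 * s ^ ((1:ℝ)-L) * ((1-s)^α / α))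
                = (L-1)^2 / α * ((s ^ (2*L-3) * s ^ ((1:ℝ)-L)) * ((1-s) ^ (1-α) * (1-s) ^ α)) := by
                  ring
              _ = (L-1)^2 / α * (s ^ (L-2) * (1-s)) := by rw [e3, e4]
    have hGnn : ∀ s ∈ Ioc (0:ℝ) v, 0 ≤ Gb s := by
      intro s hs
      simp only [hGb]
      exact mul_nonneg (div_nonneg (sq_nonneg _) hα0.le)
        (mul_nonneg (Real.rpow_nonneg hs.1.le _) (by linarith [hs.2]))
    have hGint : IntervalIntegrable Gb volume 0 v := by
      apply ContinuousOn.intervalIntegrable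
      simp only [hGb]
      exact continuousOn_const.mul
        ((continuousOn_id.rpow_const (fun x _ => Or.inr (by linarith))).mul
          (continuousOn_const.sub continuousOn_id))
    have hintA : IntervalIntegrable (fun s : ℝ => s ^ (L-2)) volume 0 v :=
      intervalIntegral.intervalIntegrable_rpow' (by linarith)
    have hintB : IntervalIntegrable (fun s : ℝ => s ^ (L-1)) volume 0 v :=
      intervalIntegral.intervalIntegrable_rpow' (by linarith)
    have hGeval : ∫ s in (0:ℝ)..v, Gb s
        = ((L-1)^2/α) * (v ^ (L-1) / (L-1)) - ((L-1)^2/α) * (v ^ L / L) := by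
      rw [intervalIntegral.integral_congr (g := fun s : ℝ =>
        ((L-1)^2/α) * s ^ (L-2) - ((L-1)^2/α) * s ^ (L-1))]
      · rw [intervalIntegral.integral_sub (hintA.const_mul _) (hintB.const_mul _),
          intervalIntegral.integral_const_mul, intervalIntegral.integral_const_mul,
          int_rpow_eval v _ (by linarith), int_rpow_eval v _ (by linarith),
          show L-2+1 = L-1 by ring, show L-1+1 = L by ring]
      · intro s hs
        rw [Set.uIcc_of_le hv0.le] at hs
        simp only [hGb]
        rcases eq_or_lt_of_le hs.1 with h | h
        · rw [← h, Real.zero_rpow (by linarith : L-1 ≠ 0)]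
          ring
        · rw [show L-1 = (L-2)+1 by ring, Real.rpow_add_one h.ne']
          ring
    calc ∫⁻ u in Ioo (0:ℝ) v,
        ENNReal.ofReal ((L - 1)^2 * u ^ ((1:ℝ) - L) * (1 - u) ^ (α - 1)) *
          ∫⁻ s in Ioo (0:ℝ) u, ENNReal.ofReal (s ^ (2 * L - 3) * (1 - s) ^ (1 - α))
        = ∫⁻ u in Ioo (0:ℝ) v, ∫⁻ s in Ioo (0:ℝ) v, H (u, s) :=
          setLIntegral_congr_fun measurableSet_Ioo stepA
      _ = ∫⁻ s in Ioo (0:ℝ) v, ∫⁻ u in Ioo (0:ℝ) v, H (u, s) :=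
          lintegral_lintegral_swap mH.aemeasurable
      _ = ∫⁻ s in Ioo (0:ℝ) v,
            ENNReal.ofReal (ge s) * ∫⁻ u in Ioo s v, ENNReal.ofReal (fe u) :=
          setLIntegral_congr_fun measurableSet_Ioo stepB
      _ ≤ ∫⁻ s in Ioo (0:ℝ) v, ENNReal.ofReal (Gb s) :=
          setLIntegral_mono' measurableSet_Ioo stepC
      _ = ENNReal.ofReal (∫ s in (0:ℝ)..v, Gb s) := lint_ioo_eq 0 v hv0.le Gb hGint hGnn
      _ ≤ ENNReal.ofReal ((2 / α) * v ^ l) := by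
          apply ENNReal.ofReal_le_ofReal
          rw [hGeval, hvl]
          have hvL : v ^ L = v ^ (L-1) * v := by
            rw [← Real.rpow_add_one hv0.ne' (L-1)]; congr 1; ring
          rw [hvL]
          have hY0 : (0:ℝ) ≤ v ^ (L-1) := Real.rpow_nonneg hv0.le _
          have hkey : (L-1)^2 * (v ^ (L-1) / (L-1)) - (L-1)^2 * (v ^ (L-1) * v / L)
              ≤ 2 * (v ^ (L-1) * v) := by
            have hL1ne : L - 1 ≠ 0 := by linarith
            have hident : (L-1)^2 * (v ^ (L-1) / (L-1)) - (L-1)^2 * (v ^ (L-1) * v / L)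
                = v ^ (L-1) * ((L-1)*L - v*(L-1)^2) / L := by
              field_simp
            rw [hident, div_le_iff₀ hL0]
            nlinarith [mul_nonneg hY0 (sub_nonneg.2 hcase'), hY0]
          calc ((L-1)^2/α) * (v ^ (L-1) / (L-1)) - ((L-1)^2/α) * (v ^ (L-1) * v / L)
              = (1/α) * ((L-1)^2 * (v ^ (L-1) / (L-1)) - (L-1)^2 * (v ^ (L-1) * v / L)) := by
                ring
            _ ≤ (1/α) * (2 * (v ^ (L-1) * v)) :=
                mul_le_mul_of_nonneg_left hkey (by positivity)
            _ = 2 / α * (v ^ (L-1) * v) := by ring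
end

section
/- Let 0 < α < 1 and set m = ⌊1/α⌋ + 1. Then the analytic function f(z) = Σ_{n=1}^∞ z^{n^{4m+1}} / n^{2mα} is bounded on the open unit disk 𝔻 (indeed |f(z)| ≤ Σ_{n=1}^∞ n^{−2mα} < ∞), but f does not belong to the weighted Dirichlet space D_α; that is, Σ_{n=1}^∞ (n^{4m+1} + 1)^α n^{−4mα} = ∞. Consequently f ∈ H^∞(𝔻) but f ∉ D_α. -/
open MeasureTheory Real

theorem stmt18 (α : ℝ) (hα0 : 0 < α) (hα1 : α < 1)
    (m : ℕ) (hm : m = Nat.floor (1 / α) + 1)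
    (f : ℂ → ℂ)
    (hf : f = fun z => ∑' n : ℕ, z ^ ((n + 1) ^ (4 * m + 1)) /
        (((((n : ℝ) + 1) ^ (2 * (m : ℝ) * α) : ℝ)) : ℂ)) :
    Summable (fun n : ℕ => ((((n : ℝ) + 1) ^ (2 * (m : ℝ) * α) : ℝ))⁻¹) ∧
    DifferentiableOn ℂ f (Metric.ball (0:ℂ) 1) ∧
    (∀ z ∈ Metric.ball (0:ℂ) 1,
      ‖f z‖ ≤ ∑' n : ℕ, ((((n : ℝ) + 1) ^ (2 * (m : ℝ) * α) : ℝ))⁻¹) ∧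
    ¬ Summable (fun n : ℕ =>
      ((((n : ℝ) + 1) ^ (4 * m + 1) + 1) ^ α) / (((n : ℝ) + 1) ^ (4 * (m : ℝ) * α))) := by
  have hmα : 1 < (m : ℝ) * α := by
    have h1 : 1 / α < (m : ℝ) := by
      rw [hm]
      push_cast
      exact Nat.lt_floor_add_one (1 / α)
    calc (1:ℝ) = (1/α) * α := by field_simp
    _ < (m : ℝ) * α := by exact mul_lt_mul_of_pos_right h1 hα0
  have hp : 1 < 2 * (m : ℝ) * α := by nlinarith
  -- Part 1: summability
  have h1 : Summable (fun n : ℕ => ((((n : ℝ) + 1) ^ (2 * (m : ℝ) * α) : ℝ))⁻¹) := by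
    have := Real.summable_nat_rpow_inv.mpr hp
    have h2 := (summable_nat_add_iff 1).mpr this
    refine h2.congr fun n => ?_
    push_cast
    ring_nf
  -- norm bound for each term
  have hbound : ∀ (n : ℕ), ∀ w ∈ Metric.ball (0:ℂ) 1,
      ‖w ^ ((n + 1) ^ (4 * m + 1)) / (((((n : ℝ) + 1) ^ (2 * (m : ℝ) * α) : ℝ)) : ℂ)‖
        ≤ ((((n : ℝ) + 1) ^ (2 * (m : ℝ) * α) : ℝ))⁻¹ := by
    intro n w hw
    have hc : (0:ℝ) < ((n : ℝ) + 1) ^ (2 * (m : ℝ) * α) :=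
      Real.rpow_pos_of_pos (by positivity) _
    rw [norm_div, Complex.norm_real, Real.norm_of_nonneg hc.le, norm_pow]
    rw [div_le_iff₀ hc, inv_mul_cancel₀ hc.ne']
    have hw1 : ‖w‖ < 1 := by simpa using hw
    exact pow_le_one₀ (norm_nonneg w) hw1.le
  refine ⟨h1, ?_, ?_, ?_⟩
  · -- differentiability
    rw [hf]
    exact Complex.differentiableOn_tsum_of_summable_norm h1
      (fun n => (differentiable_pow _).differentiableOn.div_const _)
      Metric.isOpen_ball hbound
  · -- norm bound
    intro z hz
    rw [hf]
    exact tsum_of_norm_bounded h1.hasSum (fun n => hbound n z hz)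
  · -- not summable
    intro hs
    have h0 := hs.tendsto_atTop_zero
    have hge : ∀ n : ℕ, (1:ℝ) ≤
        ((((n : ℝ) + 1) ^ (4 * m + 1) + 1) ^ α) / (((n : ℝ) + 1) ^ (4 * (m : ℝ) * α)) := by
      intro n
      set x : ℝ := (n : ℝ) + 1 with hx
      have hx1 : (1:ℝ) ≤ x := by simp [hx]
      have hx0 : (0:ℝ) < x := by linarith
      have hd : (0:ℝ) < x ^ (4 * (m : ℝ) * α) := Real.rpow_pos_of_pos hx0 _
      rw [le_div_iff₀ hd, one_mul]
      have step1 : x ^ (4 * (m : ℝ) * α) ≤ (x ^ (4 * m + 1)) ^ α := by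
        rw [← Real.rpow_natCast x (4 * m + 1), ← Real.rpow_mul hx0.le]
        apply Real.rpow_le_rpow_of_exponent_le hx1
        push_cast
        nlinarith
      calc x ^ (4 * (m : ℝ) * α) ≤ (x ^ (4 * m + 1)) ^ α := step1
        _ ≤ (x ^ (4 * m + 1) + 1) ^ α := by
            apply Real.rpow_le_rpow (by positivity) (by linarith) hα0.le
    have := le_of_tendsto_of_tendsto' tendsto_const_nhds h0 hge
    linarith
end
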